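/- Let C and D be finite simplicial complexes such that the nerve of the collection of maximal faces of C is isomorphic to the nerve of the collection of maximal faces of D. Then the geometric realizations of C and D are homotopy equivalent. -/

import Mathlib

open Geometry

/-- The maximal faces of a simplicial complex. -/
def maxFaces {E : Type*} [AddCommGroup E] [Module ℝ E]
    (C : SimplicialComplex ℝ E) : Set (Finset E) :=
  {s | s ∈ C.faces ∧ ∀ t ∈ C.faces, s ⊆ t → s = t}

open Finset

namespace NerveAux

noncomputable section
open scoped Classical

variable {E : Type*} [NormedAddCommGroup E] [NormedSpace ℝ E]
variable (K : SimplicialComplex ℝ E)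

/-- `g` is a barycentric weight function for `x` supported in `σ`. -/
def IsBary (x : E) (g : E → ℝ) (σ : Finset E) : Prop :=
  (∀ v, v ∉ σ → g v = 0) ∧ (∑ v ∈ σ, g v = 1) ∧ (∑ v ∈ σ, g v • v = x)

lemma isBary_unique_on {σ : Finset E} (hind : AffineIndependent ℝ ((↑) : σ → E))
    {g h : E → ℝ} {x : E} (hg : IsBary x g σ) (hh : IsBary x h σ) : g = h := by
  obtain ⟨hg0, hg1, hg2⟩ := hg
  obtain ⟨hh0, hh1, hh2⟩ := hh
  have hsum : ∀ f : E → ℝ, ∑ i : σ, f i = ∑ v ∈ σ, f v := fun f => Finset.sum_coe_sort σ f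
  have hwg : ∑ i ∈ (Finset.univ : Finset σ), g i = 1 := by rw [hsum g] at *; simpa using hg1
  have hwh : ∑ i ∈ (Finset.univ : Finset σ), h i = 1 := by rw [hsum h] at *; simpa using hh1
  have hcg : (Finset.univ : Finset σ).affineCombination ℝ ((↑) : σ → E) (fun i => g i) = x := by
    rw [Finset.affineCombination_eq_linear_combination _ _ _ hwg]
    rw [show ∑ i : σ, g i • (i : E) = ∑ v ∈ σ, g v • v from Finset.sum_coe_sort σ (fun v => g v • v)]
    exact hg2
  have hch : (Finset.univ : Finset σ).affineCombination ℝ ((↑) : σ → E) (fun i => h i) = x := by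
    rw [Finset.affineCombination_eq_linear_combination _ _ _ hwh]
    rw [show ∑ i : σ, h i • (i : E) = ∑ v ∈ σ, h v • v from Finset.sum_coe_sort σ (fun v => h v • v)]
    exact hh2
  have := hind.indicator_eq_of_affineCombination_eq _ _ _ _ hwg hwh (hcg.trans hch.symm)
  funext v
  by_cases hv : v ∈ σ
  · have := congrFun this ⟨v, hv⟩
    simpa using this
  · rw [hg0 v hv, hh0 v hv]

/-- extract a barycentric weight function from convex hull membership. -/
lemma exists_isBary_of_mem {σ : Finset E} {x : E} (hx : x ∈ convexHull ℝ (σ : Set E)) :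
    ∃ g : E → ℝ, (∀ v, 0 ≤ g v) ∧ IsBary x g σ := by
  rw [Finset.convexHull_eq] at hx
  obtain ⟨w, hw0, hw1, hwc⟩ := hx
  refine ⟨fun v => if v ∈ σ then w v else 0, ?_, ?_, ?_, ?_⟩
  · intro v; by_cases hv : v ∈ σ <;> simp [hv]; exact hw0 v hv
  · intro v hv; simp [hv]
  · show ∑ v ∈ σ, (if v ∈ σ then w v else 0) = 1
    rw [show ∑ v ∈ σ, (if v ∈ σ then w v else 0) = ∑ v ∈ σ, w v from
      Finset.sum_congr rfl (fun v hv => if_pos hv)]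
    exact hw1
  · show ∑ v ∈ σ, (if v ∈ σ then w v else 0) • v = x
    rw [show ∑ v ∈ σ, (if v ∈ σ then w v else 0) • v = ∑ v ∈ σ, w v • v from
      Finset.sum_congr rfl (fun v hv => by rw [if_pos hv])]
    rw [Finset.centerMass_eq_of_sum_1 _ _ hw1] at hwc
    simpa using hwc

lemma isBary_unique {σ τ : Finset E} (hσ : σ ∈ K.faces) (hτ : τ ∈ K.faces)
    {g h : E → ℝ} {x : E} (hg : IsBary x g σ) (hh : IsBary x h τ)
    (hgx : x ∈ convexHull ℝ (σ : Set E)) (hhx : x ∈ convexHull ℝ (τ : Set E)) : g = h := by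
  have hxi : x ∈ convexHull ℝ ((σ ∩ τ : Finset E) : Set E) := by
    have := K.inter_subset_convexHull hσ hτ ⟨hgx, hhx⟩
    rwa [← Finset.coe_inter] at this
  obtain ⟨r, _, hr⟩ := exists_isBary_of_mem hxi
  have hrσ : IsBary x r σ := by
    obtain ⟨hr0, hr1, hr2⟩ := hr
    refine ⟨fun v hv => hr0 v (fun hvi => hv (Finset.mem_of_mem_inter_left hvi)), ?_, ?_⟩
    · rw [← hr1]; exact (Finset.sum_subset (Finset.inter_subset_left)
        (fun v _ hv => hr0 v hv)).symm
    · rw [← hr2]; exact (Finset.sum_subset (Finset.inter_subset_left)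
        (fun v _ hv => by rw [hr0 v hv, zero_smul])).symm
  have hrτ : IsBary x r τ := by
    obtain ⟨hr0, hr1, hr2⟩ := hr
    refine ⟨fun v hv => hr0 v (fun hvi => hv (Finset.mem_of_mem_inter_right hvi)), ?_, ?_⟩
    · rw [← hr1]; exact (Finset.sum_subset (Finset.inter_subset_right)
        (fun v _ hv => hr0 v hv)).symm
    · rw [← hr2]; exact (Finset.sum_subset (Finset.inter_subset_right)
        (fun v _ hv => by rw [hr0 v hv, zero_smul])).symm
  calc g = r := isBary_unique_on (K.indep hσ) hg hrσ
  _ = h := isBary_unique_on (K.indep hτ) hrτ hh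

/-- A "good" barycentric weight function for a point of the space. -/
def GoodBary (x : E) (g : E → ℝ) : Prop :=
  (∀ v, 0 ≤ g v) ∧ ∃ σ ∈ K.faces, IsBary x g σ ∧ x ∈ convexHull ℝ (σ : Set E)

lemma exists_goodBary (x : K.space) : ∃ g, GoodBary K (↑x) g := by
  obtain ⟨σ, hσ, hx⟩ := SimplicialComplex.mem_space_iff.1 x.2
  obtain ⟨g, hg0, hg⟩ := exists_isBary_of_mem hx
  exact ⟨g, hg0, σ, hσ, hg, hx⟩

/-- The (global) barycentric coordinates of a point of the space. -/
def bary (x : K.space) : E → ℝ := (exists_goodBary K x).choose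

lemma goodBary_bary (x : K.space) : GoodBary K (↑x) (bary K x) :=
  (exists_goodBary K x).choose_spec

lemma bary_nonneg (x : K.space) (v : E) : 0 ≤ bary K x v := (goodBary_bary K x).1 v

lemma bary_eq_of_isBary {x : K.space} {σ : Finset E} {g : E → ℝ} (hσ : σ ∈ K.faces)
    (hg : IsBary (↑x) g σ) (hx : (↑x : E) ∈ convexHull ℝ (σ : Set E)) : bary K x = g := by
  obtain ⟨_, τ, hτ, hb, hbx⟩ := goodBary_bary K x
  exact isBary_unique K hτ hσ hb hg hbx hx

variable (hK : K.faces.Finite)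

/-- The finset of all vertices. -/
def vset : Finset E := hK.toFinset.sup id

lemma mem_vset {v : E} : v ∈ vset K hK ↔ ∃ σ ∈ K.faces, v ∈ σ := by
  simp [vset, Finset.mem_sup]

lemma face_subset_vset {σ : Finset E} (hσ : σ ∈ K.faces) : σ ⊆ vset K hK :=
  fun v hv => (mem_vset K hK).2 ⟨σ, hσ, hv⟩

/-- The support of a point: the vertices with positive barycentric coordinate. -/
def supp (x : K.space) : Finset E := (vset K hK).filter (fun v => bary K x v ≠ 0)

lemma bary_eq_zero_of_not_mem_supp {x : K.space} {v : E} (hv : v ∉ supp K hK x) :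
    bary K x v = 0 := by
  obtain ⟨_, σ, hσ, ⟨hb0, _, _⟩, _⟩ := goodBary_bary K x
  by_cases hvv : v ∈ vset K hK
  · by_contra h; exact hv (Finset.mem_filter.2 ⟨hvv, h⟩)
  · exact hb0 v (fun hvσ => hvv (face_subset_vset K hK hσ hvσ))

lemma supp_subset {x : K.space} {σ : Finset E} (hσ : σ ∈ K.faces)
    (hx : (↑x : E) ∈ convexHull ℝ (σ : Set E)) : supp K hK x ⊆ σ := by
  obtain ⟨g, _, hg⟩ := exists_isBary_of_mem hx
  have hb := bary_eq_of_isBary K hσ hg hx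
  intro v hv
  have := (Finset.mem_filter.1 hv).2
  rw [hb] at this
  by_contra hvσ
  exact this (hg.1 v hvσ)

lemma isBary_supp (x : K.space) : IsBary (↑x) (bary K x) (supp K hK x) := by
  obtain ⟨_, σ, hσ, ⟨hb0, hb1, hb2⟩, hbx⟩ := goodBary_bary K x
  have hsub : supp K hK x ⊆ σ := supp_subset K hK hσ hbx
  refine ⟨fun v hv => bary_eq_zero_of_not_mem_supp K hK hv, ?_, ?_⟩
  · rw [← hb1]; exact Finset.sum_subset hsub (fun v _ hv =>
      bary_eq_zero_of_not_mem_supp K hK hv)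
  · rw [← hb2]
    exact Finset.sum_subset hsub (fun v _ hv => by
      rw [bary_eq_zero_of_not_mem_supp K hK hv, zero_smul])

lemma supp_nonempty (x : K.space) : (supp K hK x).Nonempty := by
  by_contra h
  have h1 := (isBary_supp K hK x).2.1
  rw [Finset.not_nonempty_iff_eq_empty.1 h] at h1
  simpa using h1

lemma supp_mem_faces (x : K.space) : supp K hK x ∈ K.faces := by
  obtain ⟨_, σ, hσ, _, hbx⟩ := goodBary_bary K x
  exact K.down_closed hσ (supp_subset K hK hσ hbx)
    (supp_nonempty K hK x)

lemma mem_convexHull_supp (x : K.space) :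
    (↑x : E) ∈ convexHull ℝ ((supp K hK x : Finset E) : Set E) := by
  obtain ⟨h0, h1, h2⟩ := isBary_supp K hK x
  rw [Finset.convexHull_eq]
  refine ⟨bary K x, fun v _ => bary_nonneg K x v, h1, ?_⟩
  rw [Finset.centerMass_eq_of_sum_1 _ _ h1]
  simpa using h2

lemma bary_sum_vset (x : K.space) : ∑ v ∈ vset K hK, bary K x v = 1 := by
  rw [← (isBary_supp K hK x).2.1]
  exact (Finset.sum_subset (Finset.filter_subset _ _)
    (fun v _ hv => bary_eq_zero_of_not_mem_supp K hK hv)).symm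

section Continuity

lemma continuousOn_bary_coord (hK : K.faces.Finite) {σ : Finset E} (hσ : σ ∈ K.faces)
    (v : E) :
    ContinuousOn (fun x : K.space => bary K x v)
      (Subtype.val ⁻¹' (convexHull ℝ (σ : Set E))) := by
  by_cases hvσ : v ∈ σ
  swap
  · apply (continuousOn_const (c := (0 : ℝ))).congr
    intro x hx
    exact bary_eq_zero_of_not_mem_supp K hK
      (fun hmem => hvσ (supp_subset K hK hσ hx hmem))
  have hne : σ.Nonempty := Finset.nonempty_iff_ne_empty.2 (fun h => K.empty_notMem (h ▸ hσ))
  obtain ⟨v₀, hv₀⟩ := hne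
  set i₀ : {y // y ∈ σ} := ⟨v₀, hv₀⟩ with hi₀
  have hli := (affineIndependent_iff_linearIndependent_vsub ℝ ((↑) : σ → E) i₀).1 (K.indep hσ)
  set W := Submodule.span ℝ
    (Set.range fun i : {x : {y // y ∈ σ} // x ≠ i₀} => ((↑↑i : E) -ᵥ (↑i₀ : E))) with hW
  haveI : FiniteDimensional ℝ W := FiniteDimensional.span_of_finite ℝ (Set.finite_range _)
  let b : Module.Basis {x : {y // y ∈ σ} // x ≠ i₀} ℝ W := Module.Basis.span hli
  -- membership of differences in W
  have hmem : ∀ x ∈ convexHull ℝ (σ : Set E), x - v₀ ∈ W := by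
    intro x hx
    obtain ⟨g, _, hz, h1, h2⟩ := exists_isBary_of_mem hx
    have hxe : x - v₀ = ∑ u ∈ σ, g u • (u - v₀) := by
      simp only [smul_sub]
      rw [Finset.sum_sub_distrib, h2, ← Finset.sum_smul, h1, one_smul]
    rw [hxe]
    apply Submodule.sum_mem
    intro u hu
    by_cases huv : u = v₀
    · subst huv; simp
    · refine Submodule.smul_mem _ _ (Submodule.subset_span ?_)
      exact ⟨⟨⟨u, hu⟩, fun hh => huv (by simpa [hi₀, Subtype.ext_iff] using hh)⟩,
        by simp [vsub_eq_sub, hi₀]⟩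
  -- the coordinate functions
  let R : W → ℝ := fun y => ∑ i, b.repr y i
  let c' : {y // y ∈ σ} → W → ℝ := fun j y => if h : j = i₀ then 1 - R y else b.repr y ⟨j, h⟩
  have hRcont : Continuous R := by
    apply continuous_finset_sum
    intro i _
    have : (fun y : W => b.repr y i) = fun y => b.coord i y := by
      funext y; rw [Module.Basis.coord_apply]
    rw [this]
    exact (b.coord i).continuous_of_finiteDimensional
  have hc'cont : ∀ j, Continuous (c' j) := by
    intro j
    by_cases h : j = i₀
    · simp only [c', dif_pos h]
      exact continuous_const.sub hRcont
    · simp only [c', dif_neg h]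
      have : (fun y : W => b.repr y ⟨j, h⟩) = fun y => b.coord ⟨j, h⟩ y := by
        funext y; rw [Module.Basis.coord_apply]
      rw [this]
      exact (b.coord _).continuous_of_finiteDimensional
  -- the sum of the coordinates is 1
  have hsum1 : ∀ y : W, ∑ j : {y // y ∈ σ}, c' j y = 1 := by
    intro y
    rw [← Finset.add_sum_erase _ _ (Finset.mem_univ i₀)]
    have h1 : c' i₀ y = 1 - R y := dif_pos rfl
    have h2 : ∑ j ∈ Finset.univ.erase i₀, c' j y = R y := by
      rw [Finset.sum_subtype (p := fun j => j ≠ i₀) (Finset.univ.erase i₀)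
        (fun j => by simp [Finset.mem_erase]) (fun j => c' j y)]
      refine Finset.sum_congr rfl fun i _ => ?_
      show (if h : (↑i : {y // y ∈ σ}) = i₀ then 1 - R y else b.repr y ⟨↑i, h⟩) = b.repr y i
      rw [dif_neg i.2]
    rw [h1, h2]; ring
  -- the weighted sum of the vertices
  have hcombo : ∀ y : W, ∑ j : {y // y ∈ σ}, c' j y • (↑j : E) = (↑y : E) + v₀ := by
    intro y
    have hsplit : ∀ j : {y // y ∈ σ}, c' j y • (↑j : E)
        = c' j y • ((↑j : E) - v₀) + c' j y • v₀ := by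
      intro j; rw [← smul_add]; congr 1; abel
    rw [Finset.sum_congr rfl (fun j _ => hsplit j), Finset.sum_add_distrib,
      ← Finset.sum_smul, hsum1 y, one_smul]
    congr 1
    rw [← Finset.add_sum_erase _ _ (Finset.mem_univ i₀)]
    have h1 : c' i₀ y • ((↑i₀ : E) - v₀) = 0 := by
      show c' i₀ y • (v₀ - v₀) = 0
      rw [sub_self, smul_zero]
    rw [h1, zero_add]
    rw [Finset.sum_subtype (p := fun j => j ≠ i₀) (Finset.univ.erase i₀)
      (fun j => by simp [Finset.mem_erase]) (fun j => c' j y • ((↑j : E) - v₀))]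
    have h2 : ∀ i : {x : {y // y ∈ σ} // x ≠ i₀},
        c' ↑i y • ((↑↑i : E) - v₀) = b.repr y i • ((↑↑i : E) - v₀) := by
      intro i
      congr 1
      show (if h : (↑i : {y // y ∈ σ}) = i₀ then 1 - R y else b.repr y ⟨↑i, h⟩) = b.repr y i
      rw [dif_neg i.2]
    rw [Finset.sum_congr rfl (fun i _ => h2 i)]
    have := b.sum_repr y
    have hcoe := congrArg (Subtype.val : W → E) this
    rw [← hcoe]
    push_cast [Submodule.coe_sum]
    refine Finset.sum_congr rfl fun i _ => ?_
    congr 1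
    have : ((b i : W) : E) = (↑↑i : E) -ᵥ (↑i₀ : E) := congrArg Subtype.val (Module.Basis.span_apply hli i)
    rw [this, vsub_eq_sub]
  -- identification with bary
  have hkey : ∀ (x : K.space) (hx : (↑x : E) ∈ convexHull ℝ (σ : Set E)),
      bary K x = fun u => if hu : u ∈ σ then c' ⟨u, hu⟩ ⟨(↑x : E) - v₀, hmem _ hx⟩ else 0 := by
    intro x hx
    set y : W := ⟨(↑x : E) - v₀, hmem _ hx⟩ with hy
    apply bary_eq_of_isBary K hσ _ hx
    refine ⟨fun u hu => dif_neg hu, ?_, ?_⟩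
    · show ∑ u ∈ σ, (if hu : u ∈ σ then c' ⟨u, hu⟩ y else 0) = 1
      rw [Finset.sum_dite_of_true (fun u hu => hu)]
      exact hsum1 y
    · show ∑ u ∈ σ, (if hu : u ∈ σ then c' ⟨u, hu⟩ y else 0) • u = ↑x
      have hstep : ∑ u ∈ σ, (if hu : u ∈ σ then c' ⟨u, hu⟩ y else 0) • u
          = ∑ u ∈ σ, (if hu : u ∈ σ then c' ⟨u, hu⟩ y • u else 0) :=
        Finset.sum_congr rfl (fun u hu => by rw [dif_pos hu, dif_pos hu])
      rw [hstep, Finset.sum_dite_of_true (fun u hu => hu)]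
      show ∑ j : {y // y ∈ σ}, c' j y • (↑j : E) = ↑x
      rw [hcombo y]
      show (↑x : E) - v₀ + v₀ = ↑x
      abel
  -- conclude
  rw [continuousOn_iff_continuous_restrict]
  have hz2 : ∀ z : (Subtype.val ⁻¹' (convexHull ℝ (σ : Set E)) : Set K.space),
      ((z : K.space) : E) ∈ convexHull ℝ (σ : Set E) := fun z => z.2
  have hres : (Set.domRestrict (Subtype.val ⁻¹' (convexHull ℝ (σ : Set E)))
      (fun x : K.space => bary K x v))
      = fun (z : (Subtype.val ⁻¹' (convexHull ℝ (σ : Set E)) : Set K.space)) =>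
        c' ⟨v, hvσ⟩ ⟨((z : K.space) : E) - v₀, hmem _ (hz2 z)⟩ := by
    funext z
    have := hkey (↑z) (hz2 z)
    rw [Set.domRestrict_apply, this]
    exact dif_pos hvσ
  rw [hres]
  apply (hc'cont ⟨v, hvσ⟩).comp
  apply Continuous.subtype_mk
  exact (continuous_subtype_val.comp continuous_subtype_val).sub continuous_const

lemma continuous_bary (hK : K.faces.Finite) (v : E) :
    Continuous (fun x : K.space => bary K x v) := by
  apply LocallyFinite.continuous
    (f := fun σ : hK.toFinset => Subtype.val ⁻¹' (convexHull ℝ (((σ : Finset E)) : Set E)))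
  · exact locallyFinite_of_finite _
  · ext x
    simp only [Set.mem_iUnion, Set.mem_univ, iff_true]
    obtain ⟨σ, hσ, hxσ⟩ := SimplicialComplex.mem_space_iff.1 x.2
    exact ⟨⟨σ, hK.mem_toFinset.2 hσ⟩, hxσ⟩
  · intro σ
    exact (((σ : Finset E).finite_toSet.isCompact_convexHull ℝ).isClosed).preimage
      continuous_subtype_val
  · intro σ
    exact continuousOn_bary_coord K hK (hK.mem_toFinset.1 σ.2) v

end Continuity

section Map

/-- choice of a point in a finset -/
def pick (B : Finset E) : E := if h : B.Nonempty then h.choose else 0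

lemma pick_mem {B : Finset E} (h : B.Nonempty) : pick B ∈ B := by
  rw [pick, dif_pos h]; exact h.choose_spec

variable {X : Type*} [TopologicalSpace X]

lemma continuous_finset_inf' {ι : Type*} {s : Finset ι} (hs : s.Nonempty) (f : ι → X → ℝ)
    (hf : ∀ i, Continuous (f i)) : Continuous fun x => s.inf' hs (fun i => f i x) := by
  induction hs using Finset.Nonempty.cons_induction with
  | singleton i => simpa using hf i
  | cons i s his hs ih =>
    have : (fun x => (Finset.cons i s his).inf' (Finset.cons_nonempty his)
        (fun j => f j x)) = fun x => min (f i x) (s.inf' hs (fun j => f j x)) := by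
      funext x; rw [Finset.inf'_cons]
    rw [this]
    exact (hf i).min ih

lemma continuous_fold_max {ι : Type*} (s : Finset ι) (f : ι → X → ℝ)
    (hf : ∀ i, Continuous (f i)) : Continuous fun x => s.fold max 0 (fun i => f i x) := by
  classical
  induction s using Finset.induction_on with
  | empty => exact continuous_const
  | insert i s his ih =>
    have : (fun x => (insert i s).fold max 0 (fun j => f j x))
        = fun x => max (f i x) (s.fold max 0 (fun j => f j x)) := by
      funext x; rw [Finset.fold_insert his]
    rw [this]
    exact (hf i).max ih

variable (hK : K.faces.Finite)

/-- maximal barycentric coordinate -/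
def maxval (x : K.space) : ℝ := (vset K hK).fold max 0 (bary K x)

/-- the set of vertices realizing the maximal barycentric coordinate -/
def topset (x : K.space) : Finset E :=
  (vset K hK).filter (fun v => maxval K hK x ≤ bary K x v)

lemma bary_le_maxval {x : K.space} {v : E} (hv : v ∈ vset K hK) :
    bary K x v ≤ maxval K hK x :=
  (Finset.le_fold_max _).2 (Or.inr ⟨v, hv, le_rfl⟩)

lemma supp_subset_vset (x : K.space) : supp K hK x ⊆ vset K hK := Finset.filter_subset _ _

lemma maxval_pos (x : K.space) : 0 < maxval K hK x := by
  obtain ⟨v, hv⟩ := supp_nonempty K hK x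
  have h1 : bary K x v ≠ 0 := (Finset.mem_filter.1 hv).2
  have h2 : 0 < bary K x v := lt_of_le_of_ne (bary_nonneg K x v) (Ne.symm h1)
  exact lt_of_lt_of_le h2 (bary_le_maxval K hK (supp_subset_vset K hK x hv))

lemma topset_nonempty (x : K.space) : (topset K hK x).Nonempty := by
  obtain ⟨v₀, hv₀⟩ := supp_nonempty K hK x
  have hvs : (vset K hK).Nonempty := ⟨v₀, supp_subset_vset K hK x hv₀⟩
  obtain ⟨v, hv, hmax⟩ := Finset.exists_max_image (vset K hK) (bary K x) hvs
  refine ⟨v, Finset.mem_filter.2 ⟨hv, ?_⟩⟩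
  exact (Finset.fold_max_le _).2 ⟨bary_nonneg K x v, fun u hu => hmax u hu⟩

lemma topset_subset_supp (x : K.space) : topset K hK x ⊆ supp K hK x := by
  intro v hv
  obtain ⟨h1, h2⟩ := Finset.mem_filter.1 hv
  refine Finset.mem_filter.2 ⟨h1, ?_⟩
  have := lt_of_lt_of_le (maxval_pos K hK x) h2
  exact ne_of_gt this

lemma topset_mem_faces (x : K.space) : topset K hK x ∈ K.faces :=
  K.down_closed (supp_mem_faces K hK x) (topset_subset_supp K hK x)
    (topset_nonempty K hK x)

/-- the subdivision-type weight attached to a potential face `A` -/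
def mu (A : Finset E) (x : K.space) : ℝ :=
  if hA : A.Nonempty then
    max 0 (A.inf' hA (bary K x) - (vset K hK \ A).fold max 0 (bary K x)) else 0

lemma mu_nonneg (A : Finset E) (x : K.space) : 0 ≤ mu K hK A x := by
  rw [mu]; split
  · exact le_max_left _ _
  · exact le_rfl

lemma mu_continuous (A : Finset E) : Continuous (mu K hK A) := by
  by_cases hA : A.Nonempty
  · have hrw : mu K hK A = fun x => max 0 (A.inf' hA (bary K x)
        - (vset K hK \ A).fold max 0 (bary K x)) := by
      funext x; rw [mu, dif_pos hA]
    rw [hrw]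
    apply continuous_const.max
    exact (continuous_finset_inf' hA (fun v => fun x : K.space => bary K x v)
      (fun v => continuous_bary K hK v)).sub
      (continuous_fold_max _ (fun v => fun x : K.space => bary K x v)
      (fun v => continuous_bary K hK v))
  · have hrw : mu K hK A = fun _ => 0 := by funext x; rw [mu, dif_neg hA]
    rw [hrw]; exact continuous_const

lemma fold_max_nonneg {s : Finset E} (x : K.space) :
    0 ≤ s.fold max 0 (bary K x) := (Finset.le_fold_max _).2 (Or.inl le_rfl)

lemma mu_topset_pos (x : K.space) : 0 < mu K hK (topset K hK x) x := by
  rw [mu, dif_pos (topset_nonempty K hK x)]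
  have h1 : maxval K hK x ≤ (topset K hK x).inf' (topset_nonempty K hK x) (bary K x) :=
    Finset.le_inf' _ _ (fun v hv => (Finset.mem_filter.1 hv).2)
  have h2 : (vset K hK \ topset K hK x).fold max 0 (bary K x) < maxval K hK x := by
    refine (Finset.fold_max_lt _).2 ⟨maxval_pos K hK x, fun u hu => ?_⟩
    obtain ⟨hu1, hu2⟩ := Finset.mem_sdiff.1 hu
    have : ¬ maxval K hK x ≤ bary K x u := fun hle => hu2 (Finset.mem_filter.2 ⟨hu1, hle⟩)
    exact lt_of_not_ge this
  have : 0 < (topset K hK x).inf' (topset_nonempty K hK x) (bary K x)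
      - (vset K hK \ topset K hK x).fold max 0 (bary K x) := by
    have := lt_of_lt_of_le h2 h1
    linarith
  exact lt_of_lt_of_le this (le_max_right _ _)

lemma mu_pos_subset {A : Finset E} {x : K.space} (h : 0 < mu K hK A x) :
    A ⊆ supp K hK x ∧ topset K hK x ⊆ A := by
  rw [mu] at h
  by_cases hA : A.Nonempty
  swap
  · rw [dif_neg hA] at h; exact absurd h (lt_irrefl 0)
  rw [dif_pos hA] at h
  have hlt : (vset K hK \ A).fold max 0 (bary K x) < A.inf' hA (bary K x) := by
    by_contra hle
    push_neg at hle
    have : A.inf' hA (bary K x) - (vset K hK \ A).fold max 0 (bary K x) ≤ 0 := by linarith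
    rw [max_eq_left this] at h
    exact absurd h (lt_irrefl 0)
  have hApos : ∀ v ∈ A, 0 < bary K x v := by
    intro v hv
    calc (0:ℝ) ≤ (vset K hK \ A).fold max 0 (bary K x) := fold_max_nonneg K x
    _ < A.inf' hA (bary K x) := hlt
    _ ≤ bary K x v := Finset.inf'_le _ hv
  have hAsupp : A ⊆ supp K hK x := by
    intro v hv
    by_contra hns
    have := bary_eq_zero_of_not_mem_supp K hK hns
    have := hApos v hv
    linarith
  refine ⟨hAsupp, ?_⟩
  intro v hv
  by_contra hvA
  have hvsd : v ∈ vset K hK \ A := Finset.mem_sdiff.2 ⟨(Finset.mem_filter.1 hv).1, hvA⟩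
  have h3 : bary K x v ≤ (vset K hK \ A).fold max 0 (bary K x) :=
    (Finset.le_fold_max _).2 (Or.inr ⟨v, hvsd, le_rfl⟩)
  have h4 : A.inf' hA (bary K x) ≤ bary K x hA.choose := Finset.inf'_le _ hA.choose_spec
  have h5 : bary K x hA.choose ≤ maxval K hK x :=
    bary_le_maxval K hK (supp_subset_vset K hK x (hAsupp hA.choose_spec))
  have h6 : maxval K hK x ≤ bary K x v := (Finset.mem_filter.1 hv).2
  linarith

/-- total weight -/
def totalMu (x : K.space) : ℝ := ∑ A ∈ hK.toFinset, mu K hK A x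

lemma totalMu_pos (x : K.space) : 0 < totalMu K hK x := by
  apply Finset.sum_pos' (fun A _ => mu_nonneg K hK A x)
  exact ⟨topset K hK x, hK.mem_toFinset.2 (topset_mem_faces K hK x),
    mu_topset_pos K hK x⟩

lemma totalMu_continuous : Continuous (totalMu K hK) :=
  continuous_finset_sum _ (fun A _ => mu_continuous K hK A)

lemma face_nonempty {σ : Finset E} (hσ : σ ∈ K.faces) : σ.Nonempty :=
  Finset.nonempty_iff_ne_empty.2 (fun h => K.empty_notMem (h ▸ hσ))

end Map

section Transfer

variable {F : Type*} [NormedAddCommGroup F] [NormedSpace ℝ F]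
variable (hK : K.faces.Finite) (L : SimplicialComplex ℝ F)

/-- the raw nerve-transfer map -/
def nmapRaw (Φ : Finset E → Finset F) (x : K.space) : F :=
  (totalMu K hK x)⁻¹ • ∑ A ∈ hK.toFinset, mu K hK A x • pick (Φ A)

lemma nmapRaw_mem (Φ : Finset E → Finset F)
    (hΦ1 : ∀ σ ∈ K.faces, Φ σ ∈ L.faces)
    (hΦ2 : ∀ σ τ, σ ∈ K.faces → τ ∈ K.faces → σ ⊆ τ → Φ σ ⊆ Φ τ) (x : K.space) :
    nmapRaw K hK Φ x ∈ convexHull ℝ ((Φ (supp K hK x) : Finset F) : Set F) := by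
  set T := hK.toFinset.filter (fun A => mu K hK A x ≠ 0) with hT
  have hzero : ∀ A ∈ hK.toFinset, A ∉ T → mu K hK A x = 0 := by
    intro A hA hAn
    by_contra hne; exact hAn (Finset.mem_filter.2 ⟨hA, hne⟩)
  have hsum : ∑ A ∈ hK.toFinset, mu K hK A x • pick (Φ A)
      = ∑ A ∈ T, mu K hK A x • pick (Φ A) := by
    symm
    apply Finset.sum_subset (Finset.filter_subset _ _)
    intro A hA hAn
    rw [hzero A hA hAn, zero_smul]
  have htot : totalMu K hK x = ∑ A ∈ T, mu K hK A x := by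
    symm
    apply Finset.sum_subset (Finset.filter_subset _ _)
    intro A hA hAn
    exact hzero A hA hAn
  rw [nmapRaw, hsum, Finset.smul_sum]
  have hcomb : ∀ A ∈ T, (totalMu K hK x)⁻¹ • (mu K hK A x • pick (Φ A))
      = ((totalMu K hK x)⁻¹ * mu K hK A x) • pick (Φ A) := fun A _ => smul_smul _ _ _
  rw [Finset.sum_congr rfl hcomb]
  apply (convex_convexHull ℝ _).sum_mem
  · intro A _
    exact mul_nonneg (inv_nonneg.2 (le_of_lt (totalMu_pos K hK x))) (mu_nonneg K hK A x)
  · rw [← Finset.mul_sum, ← htot]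
    exact inv_mul_cancel₀ (ne_of_gt (totalMu_pos K hK x))
  · intro A hA
    obtain ⟨hAf, hAne⟩ := Finset.mem_filter.1 hA
    have hpos : 0 < mu K hK A x := lt_of_le_of_ne (mu_nonneg K hK A x) (Ne.symm hAne)
    obtain ⟨hsub, _⟩ := mu_pos_subset K hK hpos
    have hAface : A ∈ K.faces := hK.mem_toFinset.1 hAf
    have h1 : Φ A ⊆ Φ (supp K hK x) := hΦ2 _ _ hAface (supp_mem_faces K hK x) hsub
    have h2 : pick (Φ A) ∈ Φ A := pick_mem (face_nonempty L (hΦ1 _ hAface))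
    exact subset_convexHull ℝ _ (h1 h2)

lemma nmapRaw_continuous (Φ : Finset E → Finset F) : Continuous (nmapRaw K hK Φ) := by
  apply Continuous.smul
  · exact (totalMu_continuous K hK).inv₀ (fun x => ne_of_gt (totalMu_pos K hK x))
  · exact continuous_finset_sum _ (fun A _ => (mu_continuous K hK A).smul continuous_const)

/-- the nerve-transfer map as a continuous map between the underlying spaces -/
def nmap (Φ : Finset E → Finset F)
    (hΦ1 : ∀ σ ∈ K.faces, Φ σ ∈ L.faces)
    (hΦ2 : ∀ σ τ, σ ∈ K.faces → τ ∈ K.faces → σ ⊆ τ → Φ σ ⊆ Φ τ) :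
    C(K.space, L.space) where
  toFun x := ⟨nmapRaw K hK Φ x,
    SimplicialComplex.convexHull_subset_space (hΦ1 _ (supp_mem_faces K hK x))
      (nmapRaw_mem K hK L Φ hΦ1 hΦ2 x)⟩
  continuous_toFun := (nmapRaw_continuous K hK Φ).subtype_mk _

lemma supp_nmap_subset (hL : L.faces.Finite) (Φ : Finset E → Finset F)
    (hΦ1 : ∀ σ ∈ K.faces, Φ σ ∈ L.faces)
    (hΦ2 : ∀ σ τ, σ ∈ K.faces → τ ∈ K.faces → σ ⊆ τ → Φ σ ⊆ Φ τ) (x : K.space) :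
    supp L hL (nmap K hK L Φ hΦ1 hΦ2 x) ⊆ Φ (supp K hK x) :=
  supp_subset L hL (hΦ1 _ (supp_mem_faces K hK x)) (nmapRaw_mem K hK L Φ hΦ1 hΦ2 x)

lemma nmap_mem_hull (hL : L.faces.Finite) (Φ : Finset E → Finset F)
    (hΦ1 : ∀ σ ∈ K.faces, Φ σ ∈ L.faces)
    (hΦ2 : ∀ σ τ, σ ∈ K.faces → τ ∈ K.faces → σ ⊆ τ → Φ σ ⊆ Φ τ) (x : K.space) :
    ((nmap K hK L Φ hΦ1 hΦ2 x : L.space) : F)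
      ∈ convexHull ℝ ((Φ (supp K hK x) : Finset F) : Set F) :=
  nmapRaw_mem K hK L Φ hΦ1 hΦ2 x

end Transfer

section Homotopy

variable {F : Type*} [NormedAddCommGroup F] [NormedSpace ℝ F]

lemma comp_homotopic_id (hK : K.faces.Finite) (L : SimplicialComplex ℝ F) (hL : L.faces.Finite)
    (Φ : Finset E → Finset F) (Ψ : Finset F → Finset E)
    (hΦ1 : ∀ σ ∈ K.faces, Φ σ ∈ L.faces)
    (hΦ2 : ∀ σ τ, σ ∈ K.faces → τ ∈ K.faces → σ ⊆ τ → Φ σ ⊆ Φ τ)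
    (hΨ1 : ∀ τ ∈ L.faces, Ψ τ ∈ K.faces)
    (hΨ2 : ∀ σ τ, σ ∈ L.faces → τ ∈ L.faces → σ ⊆ τ → Ψ σ ⊆ Ψ τ)
    (hH : ∀ σ ∈ K.faces, ∀ τ ∈ L.faces, τ ⊆ Φ σ → ∃ ρ ∈ K.faces, σ ⊆ ρ ∧ Ψ τ ⊆ ρ) :
    ((nmap L hL K Ψ hΨ1 hΨ2).comp (nmap K hK L Φ hΦ1 hΦ2)).Homotopic
      (ContinuousMap.id K.space) := by
  set f := nmap K hK L Φ hΦ1 hΦ2 with hf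
  set g := nmap L hL K Ψ hΨ1 hΨ2 with hg
  have key : ∀ (x : K.space) (t : ℝ), 0 ≤ t → t ≤ 1 →
      (1 - t) • ((g (f x) : K.space) : E) + t • ((x : K.space) : E) ∈ K.space := by
    intro x t ht0 ht1
    obtain ⟨ρ, hρ, hσρ, hΨρ⟩ := hH (supp K hK x) (supp_mem_faces K hK x)
      (supp L hL (f x)) (supp_mem_faces L hL (f x))
      (supp_nmap_subset K hK L hL Φ hΦ1 hΦ2 x)
    have h1 : ((g (f x) : K.space) : E) ∈ convexHull ℝ (ρ : Set E) := by
      apply convexHull_mono (Finset.coe_subset.2 (hΨρ.trans (subset_refl _)))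
      exact nmap_mem_hull L hL K hK Ψ hΨ1 hΨ2 (f x)
    have h2 : ((x : K.space) : E) ∈ convexHull ℝ (ρ : Set E) := by
      apply convexHull_mono (Finset.coe_subset.2 hσρ)
      exact mem_convexHull_supp K hK x
    have hmem : (1 - t) • ((g (f x) : K.space) : E) + t • ((x : K.space) : E)
        ∈ convexHull ℝ (ρ : Set E) :=
      (convex_convexHull ℝ (ρ : Set E)) h1 h2 (by linarith) ht0 (by ring)
    exact SimplicialComplex.convexHull_subset_space hρ hmem
  constructor
  exact
    { toFun := fun p => ⟨(1 - (p.1 : ℝ)) • ((g (f p.2) : K.space) : E)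
        + (p.1 : ℝ) • ((p.2 : K.space) : E), key p.2 p.1 p.1.2.1 p.1.2.2⟩
      continuous_toFun := by
        apply Continuous.subtype_mk
        apply Continuous.add
        · apply Continuous.smul
          · exact continuous_const.sub (continuous_subtype_val.comp continuous_fst)
          · exact continuous_subtype_val.comp
              ((g.continuous.comp f.continuous).comp continuous_snd)
        · exact Continuous.smul (continuous_subtype_val.comp continuous_fst)
            (continuous_subtype_val.comp continuous_snd)
      map_zero_left := by
        intro x
        apply Subtype.ext
        simp
      map_one_left := by
        intro x
        apply Subtype.ext
        simp }

end Homotopy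

section Main

variable {F : Type*} [NormedAddCommGroup F] [NormedSpace ℝ F]

lemma exists_max_face {C : SimplicialComplex ℝ E} (hC : C.faces.Finite) {σ : Finset E}
    (hσ : σ ∈ C.faces) : ∃ s : _root_.maxFaces C, σ ⊆ s.val := by
  obtain ⟨m, hm, hmax⟩ := Set.Finite.exists_maximalFor id {τ ∈ C.faces | σ ⊆ τ}
    (hC.subset (fun τ hτ => hτ.1)) ⟨σ, hσ, subset_rfl⟩
  exact ⟨⟨m, hm.1, fun t ht hmt => le_antisymm hmt (hmax ⟨ht, hm.2.trans hmt⟩ hmt)⟩, hm.2⟩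

/-- The transfer of faces across the nerve isomorphism. -/
def tmap (C : SimplicialComplex ℝ E) (D : SimplicialComplex ℝ F) (hD : D.faces.Finite)
    (e : _root_.maxFaces C ≃ _root_.maxFaces D) (σ : Finset E) : Finset F :=
  (vset D hD).filter (fun w => ∀ s : _root_.maxFaces C, σ ⊆ s.val → w ∈ (e s).val)

lemma tmap_mono (C : SimplicialComplex ℝ E) (D : SimplicialComplex ℝ F)
    (hD : D.faces.Finite) (e : _root_.maxFaces C ≃ _root_.maxFaces D)
    {σ τ : Finset E} (hst : σ ⊆ τ) : tmap C D hD e σ ⊆ tmap C D hD e τ := by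
  intro w hw
  obtain ⟨h1, h2⟩ := Finset.mem_filter.1 hw
  exact Finset.mem_filter.2 ⟨h1, fun s hs => h2 s (hst.trans hs)⟩

lemma tmap_subset (C : SimplicialComplex ℝ E) (D : SimplicialComplex ℝ F)
    (hD : D.faces.Finite) (e : _root_.maxFaces C ≃ _root_.maxFaces D)
    {σ : Finset E} (s : _root_.maxFaces C) (hs : σ ⊆ s.val) :
    tmap C D hD e σ ⊆ (e s).val :=
  fun u hu => (Finset.mem_filter.1 hu).2 s hs

lemma mem_tmap (C : SimplicialComplex ℝ E) (D : SimplicialComplex ℝ F)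
    (hD : D.faces.Finite) (e : _root_.maxFaces C ≃ _root_.maxFaces D)
    {σ : Finset E} {w : F} :
    w ∈ tmap C D hD e σ ↔ w ∈ vset D hD ∧
      ∀ s : _root_.maxFaces C, σ ⊆ s.val → w ∈ (e s).val := Finset.mem_filter

lemma tmap_mem_faces (C : SimplicialComplex ℝ E) (hC : C.faces.Finite)
    (D : SimplicialComplex ℝ F) (hD : D.faces.Finite)
    (e : _root_.maxFaces C ≃ _root_.maxFaces D)
    (he : ∀ J : Finset (_root_.maxFaces C),
      (∃ v : E, ∀ s ∈ J, v ∈ (s : _root_.maxFaces C).val) ↔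
      (∃ w : F, ∀ s ∈ J, w ∈ (e s).val))
    {σ : Finset E} (hσ : σ ∈ C.faces) : tmap C D hD e σ ∈ D.faces := by
  haveI : Fintype (_root_.maxFaces C) := (hC.subset (fun s hs => hs.1)).fintype
  set J : Finset (_root_.maxFaces C) := Finset.univ.filter (fun s => σ ⊆ s.val) with hJ
  obtain ⟨v₀, hv₀⟩ := face_nonempty C hσ
  obtain ⟨w, hw⟩ := (he J).1 ⟨v₀, fun s hs => (Finset.mem_filter.1 hs).2 hv₀⟩
  obtain ⟨s₀, hs₀⟩ := exists_max_face hC hσ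
  have hs₀J : s₀ ∈ J := Finset.mem_filter.2 ⟨Finset.mem_univ _, hs₀⟩
  have hwmem : w ∈ tmap C D hD e σ := by
    refine (mem_tmap C D hD e).2 ⟨?_, fun s hs =>
      hw s (Finset.mem_filter.2 ⟨Finset.mem_univ _, hs⟩)⟩
    exact (mem_vset D hD).2 ⟨(e s₀).val, (e s₀).2.1, hw s₀ hs₀J⟩
  exact D.down_closed (e s₀).2.1 (tmap_subset C D hD e s₀ hs₀)
    ⟨w, hwmem⟩

lemma tmap_compat (C : SimplicialComplex ℝ E) (hC : C.faces.Finite)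
    (D : SimplicialComplex ℝ F) (hD : D.faces.Finite)
    (e : _root_.maxFaces C ≃ _root_.maxFaces D) :
    ∀ σ ∈ C.faces, ∀ τ ∈ D.faces, τ ⊆ tmap C D hD e σ →
      ∃ ρ ∈ C.faces, σ ⊆ ρ ∧ tmap D C hC e.symm τ ⊆ ρ := by
  intro σ hσ τ _ hsub
  obtain ⟨s₀, hs₀⟩ := exists_max_face hC hσ
  refine ⟨s₀.val, s₀.2.1, hs₀, ?_⟩
  have hτs : τ ⊆ (e s₀).val := hsub.trans (tmap_subset C D hD e s₀ hs₀)
  intro v hv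
  have := (Finset.mem_filter.1 hv).2 (e s₀) hτs
  rwa [Equiv.symm_apply_apply] at this

lemma he_symm (C : SimplicialComplex ℝ E) (D : SimplicialComplex ℝ F)
    (e : _root_.maxFaces C ≃ _root_.maxFaces D)
    (he : ∀ J : Finset (_root_.maxFaces C),
      (∃ v : E, ∀ s ∈ J, v ∈ (s : _root_.maxFaces C).val) ↔
      (∃ w : F, ∀ s ∈ J, w ∈ (e s).val)) :
    ∀ J : Finset (_root_.maxFaces D),
      (∃ w : F, ∀ t ∈ J, w ∈ (t : _root_.maxFaces D).val) ↔
      (∃ v : E, ∀ t ∈ J, v ∈ (e.symm t).val) := by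
  intro J
  have hmain := he (J.image e.symm)
  have h2 : (∃ v : E, ∀ s ∈ J.image e.symm, v ∈ (s : _root_.maxFaces C).val) ↔
      (∃ v : E, ∀ t ∈ J, v ∈ (e.symm t).val) := by
    constructor
    · rintro ⟨v, hv⟩
      exact ⟨v, fun t ht => hv _ (Finset.mem_image_of_mem _ ht)⟩
    · rintro ⟨v, hv⟩
      refine ⟨v, fun s hs => ?_⟩
      obtain ⟨t, ht, rfl⟩ := Finset.mem_image.1 hs
      exact hv t ht
  have h3 : (∃ w : F, ∀ s ∈ J.image e.symm, w ∈ (e s).val) ↔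
      (∃ w : F, ∀ t ∈ J, w ∈ (t : _root_.maxFaces D).val) := by
    constructor
    · rintro ⟨w, hw⟩
      refine ⟨w, fun t ht => ?_⟩
      have := hw _ (Finset.mem_image_of_mem _ ht)
      rwa [Equiv.apply_symm_apply] at this
    · rintro ⟨w, hw⟩
      refine ⟨w, fun s hs => ?_⟩
      obtain ⟨t, ht, rfl⟩ := Finset.mem_image.1 hs
      rw [Equiv.apply_symm_apply]
      exact hw t ht
  rw [← h3, ← hmain, h2]

end Main

end
end NerveAux

/-- If two finite simplicial complexes have isomorphic nerves of their families
of maximal faces, then their geometric realizations are homotopy equivalent.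
(The nerve of the family of maximal faces records, for each set `J` of maximal
faces, whether the corresponding subcomplexes intersect, i.e. whether the
maximal faces in `J` have a common vertex.) -/
theorem homotopyEquiv_of_maxFaces_nerve_iso
    {E F : Type*} [NormedAddCommGroup E] [NormedSpace ℝ E]
    [NormedAddCommGroup F] [NormedSpace ℝ F]
    (C : SimplicialComplex ℝ E) (D : SimplicialComplex ℝ F)
    (hC : C.faces.Finite) (hD : D.faces.Finite)
    (e : maxFaces C ≃ maxFaces D)
    (he : ∀ J : Finset (maxFaces C),
      (∃ v : E, ∀ s ∈ J, v ∈ (s : maxFaces C).val) ↔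
      (∃ w : F, ∀ s ∈ J, w ∈ (e s).val)) :
    Nonempty (ContinuousMap.HomotopyEquiv C.space D.space) := by
  classical
  have he' := NerveAux.he_symm C D e he
  have hΦ1 : ∀ σ ∈ C.faces, NerveAux.tmap C D hD e σ ∈ D.faces :=
    fun σ hσ => NerveAux.tmap_mem_faces C hC D hD e he hσ
  have hΨ1 : ∀ τ ∈ D.faces, NerveAux.tmap D C hC e.symm τ ∈ C.faces :=
    fun τ hτ => NerveAux.tmap_mem_faces D hD C hC e.symm he' hτ
  have hΦ2 : ∀ σ τ, σ ∈ C.faces → τ ∈ C.faces → σ ⊆ τ →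
      NerveAux.tmap C D hD e σ ⊆ NerveAux.tmap C D hD e τ :=
    fun σ τ _ _ h => NerveAux.tmap_mono C D hD e h
  have hΨ2 : ∀ σ τ, σ ∈ D.faces → τ ∈ D.faces → σ ⊆ τ →
      NerveAux.tmap D C hC e.symm σ ⊆ NerveAux.tmap D C hC e.symm τ :=
    fun σ τ _ _ h => NerveAux.tmap_mono D C hC e.symm h
  have hH1 := NerveAux.tmap_compat C hC D hD e
  have hH2 : ∀ τ ∈ D.faces, ∀ σ ∈ C.faces, σ ⊆ NerveAux.tmap D C hC e.symm τ →
      ∃ ρ ∈ D.faces, τ ⊆ ρ ∧ NerveAux.tmap C D hD e σ ⊆ ρ := by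
    have h := NerveAux.tmap_compat D hD C hC e.symm
    simpa [Equiv.symm_symm] using h
  exact ⟨{ toFun := NerveAux.nmap C hC D (NerveAux.tmap C D hD e) hΦ1 hΦ2
           invFun := NerveAux.nmap D hD C (NerveAux.tmap D C hC e.symm) hΨ1 hΨ2
           left_inv := NerveAux.comp_homotopic_id C hC D hD _ _ hΦ1 hΦ2 hΨ1 hΨ2 hH1
           right_inv := NerveAux.comp_homotopic_id D hD C hC _ _ hΨ1 hΨ2 hΦ1 hΦ2 hH2 }⟩
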